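/- Let k, n, r be integers and let M = !![2k+1, r; 0, 2n+1] over ℤ. Then M can be written as A² − B² for some upper-triangular 2×2 integer matrices A and B if and only if gcd(k+n, 2) divides r. Equivalently: if k and n have opposite parity then M is representable for every r, and if k and n have the same parity then M is representable exactly when r is even. -/

import Mathlib

/-- A 2×2 matrix is upper-triangular if its lower-left entry is 0. -/
def IsUpperTriangular {R : Type*} [Ring R] (A : Matrix (Fin 2) (Fin 2) R) : Prop :=
  A 1 0 = 0

/-- `T` is representable as a difference of two squares of upper-triangular matrices. -/
def ReprDiffSqUT {R : Type*} [Ring R] (T : Matrix (Fin 2) (Fin 2) R) : Prop :=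
  ∃ A B : Matrix (Fin 2) (Fin 2) R,
    IsUpperTriangular A ∧ IsUpperTriangular B ∧ T = A ^ 2 - B ^ 2

lemma sq_decomp (a : ℤ) : ∃ x p, a * a = 4 * x + p ∧ a % 2 = p ∧ (p = 0 ∨ p = 1) := by
  obtain ⟨u, h⟩ | ⟨u, h⟩ := Int.even_or_odd a
  · exact ⟨u * u, 0, by subst h; ring, by omega, Or.inl rfl⟩
  · exact ⟨u * u + u, 1, by subst h; ring, by omega, Or.inr rfl⟩

theorem odd_diagonal_case (k n r : ℤ) :
    ReprDiffSqUT !![2 * k + 1, r; 0, 2 * n + 1] ↔ (Int.gcd (k + n) 2 : ℤ) ∣ r := by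
  constructor
  · rintro ⟨A, B, hA, hB, hM⟩
    have hA' : A 1 0 = 0 := hA
    have hB' : B 1 0 = 0 := hB
    have e00 := congrFun (congrFun hM 0) 0
    have e01 := congrFun (congrFun hM 0) 1
    have e11 := congrFun (congrFun hM 1) 1
    simp [pow_two, Matrix.mul_apply, Fin.sum_univ_two, Matrix.sub_apply, hA', hB'] at e00 e01 e11
    obtain ⟨xa, pa, ha1, ha2, ha3⟩ := sq_decomp (A 0 0)
    obtain ⟨xc, pc, hc1, hc2, hc3⟩ := sq_decomp (A 1 1)
    obtain ⟨xd, pd, hd1, hd2, hd3⟩ := sq_decomp (B 0 0)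
    obtain ⟨xf, pf, hf1, hf2, hf3⟩ := sq_decomp (B 1 1)
    have L1 : (4 * xa + pa) - (4 * xd + pd) = 2 * k + 1 := by
      linear_combination -e00 - ha1 + hd1
    have L2 : (4 * xc + pc) - (4 * xf + pf) = 2 * n + 1 := by
      linear_combination -e11 - hc1 + hf1
    have key : 2 ∣ (k + n) → 2 ∣ r := by
      rintro ⟨m, hm⟩
      have hac : 2 ∣ (A 0 0 + A 1 1) := by omega
      have hdf : 2 ∣ (B 0 0 + B 1 1) := by omega
      obtain ⟨p, hp⟩ := hac
      obtain ⟨q, hq⟩ := hdf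
      exact ⟨A 0 1 * p - B 0 1 * q, by linear_combination e01 + A 0 1 * hp - B 0 1 * hq⟩
    rcases Int.even_or_odd (k + n) with he | ⟨t, ht⟩
    · exact dvd_trans (Int.gcd_dvd_right _ _) (key he.two_dvd)
    · have : Int.gcd (k + n) 2 = 1 := by
        rw [← Int.isCoprime_iff_gcd_eq_one]
        exact ⟨1, -t, by linarith⟩
      rw [this]
      exact one_dvd r
  · intro h
    rcases Int.even_or_odd (k + n) with ⟨m, hm⟩ | ⟨t, ht⟩
    · have h2 : (2 : ℤ) ∣ r := by
        refine dvd_trans ?_ h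
        exact Int.dvd_coe_gcd ⟨m, by omega⟩ (dvd_refl 2)
      obtain ⟨s, hs⟩ := h2
      refine ⟨!![k + 1, s; 0, n + 1], !![k, s; 0, n], rfl, rfl, ?_⟩
      ext i j
      fin_cases i <;> fin_cases j <;>
        simp [pow_two, Matrix.mul_apply, Fin.sum_univ_two, Matrix.sub_apply] <;>
        first
          | ring1
          | linear_combination hs
    · refine ⟨!![k + 1, r * (t + 1); 0, n + 1], !![k, r * (t + 2); 0, n], rfl, rfl, ?_⟩
      ext i j
      fin_cases i <;> fin_cases j <;>
        simp [pow_two, Matrix.mul_apply, Fin.sum_univ_two, Matrix.sub_apply] <;>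
        first
          | ring1
          | linear_combination r * ht
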